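/- For all n ≥ 0, a_n = b_n + b_{n+1}. -/
import Mathlib


/-- `pre2 s` is the multiset of all pairwise products of two distinct entries
(by position) of the multiset `s`, i.e. the summands of `e₂` evaluated at `s`. -/
def pre2 (s : Multiset ℕ) : Multiset ℕ := (Multiset.powersetCard 2 s).map Multiset.prod

open Classical in
/-- The finset of binary partitions of `n`: partitions all of whose parts are powers of 2. -/
noncomputable def binaryPartitions (n : ℕ) : Finset (Nat.Partition n) :=
  Finset.univ.filter fun l => ∀ p ∈ l.parts, ∃ i : ℕ, p = 2 ^ i

/-- `a n = m₁(ImB₂(n))`: the total number of parts equal to 1 in the image of `pre2`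
on binary partitions of `n` with at least two parts; by injectivity this equals
`∑_{λ ∈ B(n)} C(m₁(λ), 2)`. -/
noncomputable def a (n : ℕ) : ℕ :=
  ∑ l ∈ binaryPartitions n, Nat.choose (l.parts.count 1) 2

/-- `b n = m₂(ImB₂(n))`: the total number of parts equal to 2 in the image of `pre2`
on binary partitions of `n` with at least two parts; by injectivity this equals
`∑_{λ ∈ B(n)} m₁(λ)·m₂(λ)`. -/
noncomputable def b (n : ℕ) : ℕ :=
  ∑ l ∈ binaryPartitions n, (l.parts.count 1) * (l.parts.count 2)

open Finset Multiset Classical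

lemma mem_binaryPartitions {n : ℕ} {l : Nat.Partition n} :
    l ∈ binaryPartitions n ↔ ∀ p ∈ l.parts, ∃ i : ℕ, p = 2 ^ i := by
  simp [binaryPartitions]

lemma count_le_n {n : ℕ} (l : Nat.Partition n) (x : ℕ) : l.parts.count x ≤ n := by
  have h1 : l.parts.count x ≤ Multiset.card l.parts := Multiset.count_le_card x _
  have h2 : (Multiset.card l.parts) • 1 ≤ l.parts.sum :=
    Multiset.card_nsmul_le_sum (fun y hy => l.parts_pos hy)
  simp only [smul_eq_mul, mul_one, l.parts_sum] at h2
  omega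

lemma F_eq (m : ℕ) :
    ∑ k ∈ Finset.range (m / 2), (2 * (m - 2 * (k + 1)) + 1) = m.choose 2 := by
  induction m using Nat.strong_induction_on with
  | _ m ih =>
    match m with
    | 0 => simp
    | 1 => simp
    | (m + 2) =>
      have h2 : (m + 2) / 2 = m / 2 + 1 := by omega
      rw [h2, Finset.sum_range_succ']
      have hcong : ∀ k ∈ Finset.range (m / 2),
          2 * (m + 2 - 2 * (k + 1 + 1)) + 1 = 2 * (m - 2 * (k + 1)) + 1 := by
        intro k _; omega
      rw [Finset.sum_congr rfl hcong, ih m (by omega)]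
      have hch : (m + 2).choose 2 = m.choose 2 + (2 * m + 1) := by
        simp [Nat.choose_succ_succ, Nat.choose_one_right]; omega
      omega

lemma choose_decomp {m N : ℕ} (h : m ≤ N) :
    m.choose 2 =
      ∑ k ∈ Finset.range N, (if 2 * (k + 1) ≤ m then 2 * (m - 2 * (k + 1)) + 1 else 0) := by
  have hsub : Finset.range (m / 2) ⊆ Finset.range N :=
    Finset.range_subset_range.mpr (le_trans (Nat.div_le_self m 2) h)
  rw [← Finset.sum_subset hsub (by intro x hx hx'; rw [if_neg]; simp only [Finset.mem_range] at hx hx'; omega)]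
  rw [← F_eq m]
  refine Finset.sum_congr rfl fun k hk => ?_
  rw [if_pos]
  simp only [Finset.mem_range] at hk
  omega

lemma ite_count {c m N : ℕ} (h : m ≤ N) :
    ∑ k ∈ Finset.range N, (if k + 1 ≤ m then c else 0) = c * m := by
  have hsub : Finset.range m ⊆ Finset.range N := Finset.range_subset_range.mpr h
  rw [← Finset.sum_subset hsub (by intro x hx hx'; rw [if_neg]; simp only [Finset.mem_range] at hx hx'; omega)]
  rw [Finset.sum_congr rfl (fun k hk => if_pos (by simp only [Finset.mem_range] at hk; omega))]
  simp [mul_comm]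

lemma key1 (n : ℕ) :
    b (n + 1) = ∑ l ∈ binaryPartitions n, (l.parts.count 1 + 1) * l.parts.count 2 := by
  unfold b
  rw [← Finset.sum_filter_of_ne (p := fun l : Nat.Partition (n + 1) => 1 ∈ l.parts)
    (by
      intro l _ hne
      by_contra hmem
      rw [Multiset.count_eq_zero_of_notMem hmem] at hne
      simp at hne)]
  refine Finset.sum_bij' (i := fun l hl => (⟨l.parts.erase 1,
      fun {i} hi => l.parts_pos (Multiset.mem_of_mem_erase hi), ?_⟩ : Nat.Partition n))
    (j := fun l hl => (⟨1 ::ₘ l.parts, ?_, ?_⟩ : Nat.Partition (n + 1))) ?_ ?_ ?_ ?_ ?_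
  · -- sum of erase
    have h1 : (1 : ℕ) ∈ l.parts := (Finset.mem_filter.mp hl).2
    have := Multiset.cons_erase h1
    have hs : (1 ::ₘ l.parts.erase 1).sum = n + 1 := by rw [this, l.parts_sum]
    rw [Multiset.sum_cons] at hs
    omega
  · -- pos for cons
    intro i hi
    rcases Multiset.mem_cons.mp hi with h | h
    · omega
    · exact l.parts_pos h
  · -- sum for cons
    rw [Multiset.sum_cons, l.parts_sum, add_comm]
  · -- hi : i maps into binaryPartitions n
    intro l hl
    rw [mem_binaryPartitions]
    intro p hp
    exact (mem_binaryPartitions.mp (Finset.mem_filter.mp hl).1) p (Multiset.mem_of_mem_erase hp)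
  · -- hj
    intro l hl
    rw [Finset.mem_filter]
    constructor
    · rw [mem_binaryPartitions]
      intro p hp
      rcases Multiset.mem_cons.mp hp with h | h
      · exact ⟨0, by simp [h]⟩
      · exact mem_binaryPartitions.mp hl p h
    · exact Multiset.mem_cons_self 1 _
  · -- left_inv
    intro l hl
    apply Nat.Partition.ext
    simp only
    exact Multiset.cons_erase (Finset.mem_filter.mp hl).2
  · -- right_inv
    intro l hl
    apply Nat.Partition.ext
    simp only
    exact Multiset.erase_cons_head 1 _
  · -- values
    intro l hl
    have h1 : (1 : ℕ) ∈ l.parts := (Finset.mem_filter.mp hl).2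
    have hc1 : (l.parts.erase 1).count 1 = l.parts.count 1 - 1 := by
      rw [Multiset.count_erase_self]
    have hc2 : (l.parts.erase 1).count 2 = l.parts.count 2 := by
      rw [Multiset.count_erase_of_ne (by norm_num)]
    have hpos : 1 ≤ l.parts.count 1 := Multiset.one_le_count_iff_mem.mpr h1
    simp only [hc1, hc2]
    congr 1
    omega

lemma step (n k : ℕ) :
    ∑ l ∈ binaryPartitions n,
        (if 2 * (k + 1) ≤ l.parts.count 1 then 2 * (l.parts.count 1 - 2 * (k + 1)) + 1 else 0)
      = ∑ l ∈ binaryPartitions n,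
        (if k + 1 ≤ l.parts.count 2 then 2 * l.parts.count 1 + 1 else 0) := by
  rw [← Finset.sum_filter, ← Finset.sum_filter]
  refine Finset.sum_bij'
    (i := fun l hl => (⟨Multiset.replicate (k + 1) 2 + (l.parts - Multiset.replicate (2 * (k + 1)) 1), ?_, ?_⟩ : Nat.Partition n))
    (j := fun l hl => (⟨Multiset.replicate (2 * (k + 1)) 1 + (l.parts - Multiset.replicate (k + 1) 2), ?_, ?_⟩ : Nat.Partition n))
    ?_ ?_ ?_ ?_ ?_
  · -- pos i
    intro i hi
    rcases Multiset.mem_add.mp hi with h | h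
    · have := Multiset.eq_of_mem_replicate h; omega
    · exact l.parts_pos (Multiset.mem_of_le (tsub_le_self) h)
  · -- sum i
    have hc : 2 * (k + 1) ≤ l.parts.count 1 := (Finset.mem_filter.mp hl).2
    have hle : Multiset.replicate (2 * (k + 1)) 1 ≤ l.parts :=
      Multiset.le_count_iff_replicate_le.mp hc
    have heq : l.parts - Multiset.replicate (2 * (k + 1)) 1 + Multiset.replicate (2 * (k + 1)) 1 = l.parts :=
      tsub_add_cancel_of_le hle
    have hsum := congrArg Multiset.sum heq
    rw [Multiset.sum_add, Multiset.sum_replicate, l.parts_sum] at hsum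
    rw [Multiset.sum_add, Multiset.sum_replicate]
    simp only [smul_eq_mul] at hsum ⊢
    omega
  · -- pos j
    intro i hi
    rcases Multiset.mem_add.mp hi with h | h
    · have := Multiset.eq_of_mem_replicate h; omega
    · exact l.parts_pos (Multiset.mem_of_le (tsub_le_self) h)
  · -- sum j
    have hc : k + 1 ≤ l.parts.count 2 := (Finset.mem_filter.mp hl).2
    have hle : Multiset.replicate (k + 1) 2 ≤ l.parts :=
      Multiset.le_count_iff_replicate_le.mp hc
    have heq : l.parts - Multiset.replicate (k + 1) 2 + Multiset.replicate (k + 1) 2 = l.parts :=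
      tsub_add_cancel_of_le hle
    have hsum := congrArg Multiset.sum heq
    rw [Multiset.sum_add, Multiset.sum_replicate, l.parts_sum] at hsum
    rw [Multiset.sum_add, Multiset.sum_replicate]
    simp only [smul_eq_mul] at hsum ⊢
    omega
  · -- hi
    intro l hl
    rw [Finset.mem_filter]
    constructor
    · rw [mem_binaryPartitions]
      intro p hp
      rcases Multiset.mem_add.mp hp with h | h
      · exact ⟨1, by rw [Multiset.eq_of_mem_replicate h]; norm_num⟩
      · exact (mem_binaryPartitions.mp (Finset.mem_filter.mp hl).1) p
          (Multiset.mem_of_le (tsub_le_self) h)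
    · simp only [Multiset.count_add, Multiset.count_replicate_self, Multiset.count_sub,
        Multiset.count_replicate]
      norm_num
  · -- hj
    intro l hl
    rw [Finset.mem_filter]
    constructor
    · rw [mem_binaryPartitions]
      intro p hp
      rcases Multiset.mem_add.mp hp with h | h
      · exact ⟨0, by rw [Multiset.eq_of_mem_replicate h]; norm_num⟩
      · exact (mem_binaryPartitions.mp (Finset.mem_filter.mp hl).1) p
          (Multiset.mem_of_le (tsub_le_self) h)
    · have hc : k + 1 ≤ l.parts.count 2 := (Finset.mem_filter.mp hl).2
      simp only [Multiset.count_add, Multiset.count_replicate_self, Multiset.count_sub,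
        Multiset.count_replicate]
      norm_num
  · -- left_inv
    intro l hl
    apply Nat.Partition.ext
    simp only
    have hc : 2 * (k + 1) ≤ l.parts.count 1 := (Finset.mem_filter.mp hl).2
    have hle : Multiset.replicate (2 * (k + 1)) 1 ≤ l.parts :=
      Multiset.le_count_iff_replicate_le.mp hc
    rw [add_tsub_cancel_left, add_comm, tsub_add_cancel_of_le hle]
  · -- right_inv
    intro l hl
    apply Nat.Partition.ext
    simp only
    have hc : k + 1 ≤ l.parts.count 2 := (Finset.mem_filter.mp hl).2
    have hle : Multiset.replicate (k + 1) 2 ≤ l.parts :=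
      Multiset.le_count_iff_replicate_le.mp hc
    rw [add_tsub_cancel_left, add_comm, tsub_add_cancel_of_le hle]
  · -- values
    intro l hl
    have hc : 2 * (k + 1) ≤ l.parts.count 1 := (Finset.mem_filter.mp hl).2
    simp only [Multiset.count_add, Multiset.count_replicate_self, Multiset.count_sub,
      Multiset.count_replicate]
    norm_num

lemma key2 (n : ℕ) :
    a n = ∑ l ∈ binaryPartitions n, (2 * l.parts.count 1 + 1) * l.parts.count 2 := by
  unfold a
  calc
    ∑ l ∈ binaryPartitions n, (l.parts.count 1).choose 2
        = ∑ l ∈ binaryPartitions n, ∑ k ∈ Finset.range n,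
            (if 2 * (k + 1) ≤ l.parts.count 1 then 2 * (l.parts.count 1 - 2 * (k + 1)) + 1 else 0) :=
      Finset.sum_congr rfl fun l _ => choose_decomp (count_le_n l 1)
    _ = ∑ k ∈ Finset.range n, ∑ l ∈ binaryPartitions n,
            (if 2 * (k + 1) ≤ l.parts.count 1 then 2 * (l.parts.count 1 - 2 * (k + 1)) + 1 else 0) :=
      Finset.sum_comm
    _ = ∑ k ∈ Finset.range n, ∑ l ∈ binaryPartitions n,
            (if k + 1 ≤ l.parts.count 2 then 2 * l.parts.count 1 + 1 else 0) :=
      Finset.sum_congr rfl fun k _ => step n k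
    _ = ∑ l ∈ binaryPartitions n, ∑ k ∈ Finset.range n,
            (if k + 1 ≤ l.parts.count 2 then 2 * l.parts.count 1 + 1 else 0) :=
      Finset.sum_comm
    _ = ∑ l ∈ binaryPartitions n, (2 * l.parts.count 1 + 1) * l.parts.count 2 :=
      Finset.sum_congr rfl fun l _ => ite_count (count_le_n l 2)

theorem stmt_11 (n : ℕ) :
    a n = b n + b (n + 1) := by
  rw [key2 n, key1 n]
  unfold b
  rw [← Finset.sum_add_distrib]
  exact Finset.sum_congr rfl fun l _ => by ring
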